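/- Let R be a principal ideal domain, V a free R-module of rank n, and W a nonzero R-submodule of V generated by elements w_1,...,w_m. Suppose that for every prime p of R, the subspace of the (R/pR)-vector space V/pV spanned by the images of w_1,...,w_m has dimension equal to the dimension over Frac(R) of the Frac(R)-span of W in V ⊗ Frac(R). Then W is a direct summand of V. -/

import Mathlib

open TensorProduct Module

section Aux

variable {R : Type*} [CommRing R] {V : Type*} [AddCommGroup V] [Module R V]

/-- If two subsets of `V` have the same `R`-span, then their images in `L ⊗[R] V`
have the same `L`-span. -/
lemma aux_span_tmul_eq (L : Type*) [CommRing L] [Algebra R L] {s t : Set V}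
    (h : Submodule.span R s = Submodule.span R t) :
    Submodule.span L ((fun v => ((1 : L) ⊗ₜ[R] v : L ⊗[R] V)) '' s)
      = Submodule.span L ((fun v => ((1 : L) ⊗ₜ[R] v : L ⊗[R] V)) '' t) := by
  set g : V →ₗ[R] L ⊗[R] V := TensorProduct.mk R L V 1 with hg
  have key : ∀ s t : Set V, Submodule.span R s ≤ Submodule.span R t →
      Submodule.span L (g '' s) ≤ Submodule.span L (g '' t) := by
    intro s t hst
    rw [Submodule.span_le]
    rintro x ⟨v, hv, rfl⟩
    have hv' : v ∈ Submodule.span R t := hst (Submodule.subset_span hv)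
    have h1 : (Submodule.span R t).map g ≤ (Submodule.span L (g '' t)).restrictScalars R := by
      rw [Submodule.map_span, Submodule.span_le]
      exact fun x hx => Submodule.subset_span hx
    exact h1 (Submodule.mem_map_of_mem hv')
  exact le_antisymm (key s t h.le) (key t s h.ge)

lemma aux_span_tmul_range_eq (L : Type*) [CommRing L] [Algebra R L]
    {m r : ℕ} (w : Fin m → V) (u : Fin r → V) (a : Fin r → R)
    (h : Submodule.span R (Set.range w) = Submodule.span R (Set.range fun i => a i • u i)) :
    Submodule.span L (Set.range fun i => ((1 : L) ⊗ₜ[R] w i : L ⊗[R] V))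
      = Submodule.span L
          (Set.range fun i => algebraMap R L (a i) • ((1 : L) ⊗ₜ[R] u i : L ⊗[R] V)) := by
  have hfun : (fun i => algebraMap R L (a i) • ((1 : L) ⊗ₜ[R] u i : L ⊗[R] V))
      = fun i => ((1 : L) ⊗ₜ[R] (a i • u i) : L ⊗[R] V) := by
    funext i
    rw [TensorProduct.tmul_smul, algebraMap_smul]
  have h1 : (Set.range fun i => ((1 : L) ⊗ₜ[R] w i : L ⊗[R] V))
      = (fun v => ((1 : L) ⊗ₜ[R] v : L ⊗[R] V)) '' Set.range w :=
    Set.range_comp (fun v : V => ((1 : L) ⊗ₜ[R] v : L ⊗[R] V)) w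
  have h2 : (Set.range fun i => ((1 : L) ⊗ₜ[R] (a i • u i) : L ⊗[R] V))
      = (fun v => ((1 : L) ⊗ₜ[R] v : L ⊗[R] V)) '' Set.range (fun i => a i • u i) :=
    Set.range_comp (fun v : V => ((1 : L) ⊗ₜ[R] v : L ⊗[R] V)) (fun i => a i • u i)
  rw [hfun, h1, h2]
  exact aux_span_tmul_eq L h

lemma aux_ne_zero_of_finrank (k : Type*) [Field k] [Algebra R k]
    {r : ℕ} (e : Fin r → k ⊗[R] V) (c : Fin r → k)
    (h : Module.finrank k (Submodule.span k
        (Set.range fun i => c i • e i)) = r) (i : Fin r) : c i ≠ 0 := by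
  have hli : LinearIndependent k (fun i => c i • e i) := by
    rw [linearIndependent_iff_card_eq_finrank_span]
    rw [Set.finrank, h, Fintype.card_fin]
  intro hc
  have hne := hli.ne_zero i
  rw [hc, zero_smul] at hne
  exact hne rfl

end Aux

/-- Lemma `R-mod` (Premet–Topley): over a PID `R`, if `W ⊆ V` is a nonzero submodule of a
free module of rank `n`, generated by `w₁, …, w_m`, and for every prime `p` of `R` the span of
the images of the `wᵢ` in `(R/pR) ⊗ V ≅ V/pV` has dimension equal to the dimension of the
`Frac(R)`-span of `W` in `Frac(R) ⊗ V`, then `W` is a direct summand of `V`. -/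
theorem stmt0 {R : Type*} [CommRing R] [IsDomain R] [IsPrincipalIdealRing R]
    {V : Type*} [AddCommGroup V] [Module R V] [Module.Free R V] [Module.Finite R V]
    (n : ℕ) (hrank : Module.finrank R V = n)
    {m : ℕ} (w : Fin m → V)
    (W : Submodule R V) (hWspan : W = Submodule.span R (Set.range w)) (hW0 : W ≠ ⊥)
    (hdim : ∀ p : R, Prime p →
      Module.finrank (R ⧸ Ideal.span {p})
        (Submodule.span (R ⧸ Ideal.span {p})
          (Set.range fun i => ((1 : R ⧸ Ideal.span {p}) ⊗ₜ[R] w i :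
            (R ⧸ Ideal.span {p}) ⊗[R] V)))
      = Module.finrank (FractionRing R)
        (Submodule.span (FractionRing R)
          (Set.range fun i => ((1 : FractionRing R) ⊗ₜ[R] w i :
            (FractionRing R) ⊗[R] V)))) :
    ∃ U : Submodule R V, IsCompl W U := by
  classical
  -- Smith normal form
  obtain ⟨r, ⟨bM, bN, f, a, hsnf⟩⟩ :=
    W.smithNormalForm (Module.Free.chooseBasis R V)
  -- `W` is spanned by the `a i • bM (f i)`
  have hWa : Submodule.span R (Set.range w)
      = Submodule.span R (Set.range fun i => a i • bM (f i)) := by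
    rw [← hWspan]
    conv_lhs => rw [← Submodule.map_subtype_top W, ← bN.span_eq]
    rw [Submodule.map_span, ← Set.range_comp]
    have : (W.subtype ∘ bN) = fun i => a i • bM (f i) := funext fun i => hsnf i
    rw [this]
  -- the `a i` are nonzero
  have ha0 : ∀ i, a i ≠ 0 := by
    intro i hi
    apply bN.ne_zero i
    have := hsnf i
    rw [hi, zero_smul] at this
    exact Subtype.ext this
  -- dimension over the fraction field is `r`
  set K := FractionRing R
  have hKspan := aux_span_tmul_range_eq K w (fun i => bM (f i)) a hWa
  have hbK : LinearIndependent K (fun i : Fin r => ((1 : K) ⊗ₜ[R] bM (f i) : K ⊗[R] V)) := by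
    have h1 : LinearIndependent K ((bM.baseChange K) ∘ f) :=
      (bM.baseChange K).linearIndependent.comp f f.injective
    have h2 : ((bM.baseChange K) ∘ f) = fun i : Fin r => ((1 : K) ⊗ₜ[R] bM (f i) : K ⊗[R] V) := by
      funext i
      simp [Basis.baseChange_apply]
    rwa [h2] at h1
  have hcK : ∀ i, algebraMap R K (a i) ≠ 0 := fun i hi =>
    ha0 i ((map_eq_zero_iff _ (IsFractionRing.injective R K)).mp hi)
  have hKli : LinearIndependent K
      (fun i : Fin r => algebraMap R K (a i) • ((1 : K) ⊗ₜ[R] bM (f i) : K ⊗[R] V)) := by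
    have := hbK.units_smul (fun i => Units.mk0 _ (hcK i))
    convert this using 1
    exact funext fun i => rfl
  have hKdim : Module.finrank K
      (Submodule.span K (Set.range fun i => ((1 : K) ⊗ₜ[R] w i : K ⊗[R] V))) = r := by
    rw [hKspan, finrank_span_eq_card hKli, Fintype.card_fin]
  -- every `a i` is a unit
  have haunit : ∀ i, IsUnit (a i) := by
    intro i
    by_contra hnu
    obtain ⟨p, hpirr, hpdvd⟩ := WfDvdMonoid.exists_irreducible_factor hnu (ha0 i)
    have hp : Prime p := hpirr.prime
    haveI : (Ideal.span {p} : Ideal R).IsMaximal :=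
      PrincipalIdealRing.isMaximal_of_irreducible hpirr
    have hkspan := aux_span_tmul_range_eq (R ⧸ Ideal.span {p}) w (fun i => bM (f i)) a hWa
    have hkdim : Module.finrank (R ⧸ Ideal.span {p})
        (Submodule.span (R ⧸ Ideal.span {p})
          (Set.range fun i : Fin r => algebraMap R (R ⧸ Ideal.span {p}) (a i) •
            ((1 : R ⧸ Ideal.span {p}) ⊗ₜ[R] bM (f i) : (R ⧸ Ideal.span {p}) ⊗[R] V))) = r := by
      rw [← hkspan, hdim p hp, hKdim]
    letI fld : Field (R ⧸ Ideal.span {p}) := Ideal.Quotient.field _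
    have hne : algebraMap R (R ⧸ Ideal.span {p}) (a i) ≠ 0 :=
      aux_ne_zero_of_finrank (R ⧸ Ideal.span {p})
        (fun i : Fin r => ((1 : R ⧸ Ideal.span {p}) ⊗ₜ[R] bM (f i) : (R ⧸ Ideal.span {p}) ⊗[R] V))
        (fun i => algebraMap R (R ⧸ Ideal.span {p}) (a i)) hkdim i
    exact hne (Ideal.Quotient.eq_zero_iff_mem.mpr (Ideal.mem_span_singleton.mpr hpdvd))
  -- hence `W` is the span of the basis vectors `bM (f i)`
  have hWb : W = Submodule.span R (bM '' Set.range f) := by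
    rw [hWspan, hWa, ← Set.range_comp]
    apply le_antisymm
    · rw [Submodule.span_le]
      rintro x ⟨i, rfl⟩
      exact Submodule.smul_mem _ _ (Submodule.subset_span ⟨i, rfl⟩)
    · rw [Submodule.span_le]
      rintro x ⟨i, rfl⟩
      obtain ⟨u, hu⟩ := haunit i
      have : (bM ∘ f) i = (↑u⁻¹ : R) • (a i • bM (f i)) := by
        rw [← hu, smul_smul, Units.inv_mul, one_smul]; rfl
      rw [this]
      exact Submodule.smul_mem _ _ (Submodule.subset_span ⟨i, rfl⟩)
  refine ⟨Submodule.span R (bM '' (Set.range f)ᶜ), ?_, ?_⟩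
  · rw [hWb]
    exact bM.linearIndependent.disjoint_span_image disjoint_compl_right
  · rw [codisjoint_iff, hWb, ← Submodule.span_union, ← Set.image_union,
      Set.union_compl_self, Set.image_univ, bM.span_eq]
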